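/- Fix p ∈ [0,1] and valuations (s,b) ∈ [0,1]^2. Let C be a Bernoulli(p) random variable, U uniform on [0,p], V uniform on [p,1], all independent. Define (P̂,Q̂) = (U, p) if C = 1 and (P̂,Q̂) = (p, V) if C = 0. Then E[1{s ≤ P̂ ≤ Q̂ ≤ b}] = (b − s)·1{s ≤ p ≤ b}, i.e., the one-bit trade indicator at the randomized price pair is an unbiased estimator of the gain from trade at price p. -/

import Mathlib

open MeasureTheory Set

/-- Unbiasedness of the one-bit estimator of the gain from trade:
tossing a coin with bias p, posting (U,p) with U uniform on [0,p] on heads and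
(p,V) with V uniform on [p,1] on tails, the expected trade indicator equals
(b − s)·1{s ≤ p ≤ b}. -/
theorem one_bit_estimator_unbiased
    (p s b : ℝ) (hp : p ∈ Set.Icc (0:ℝ) 1)
    (hs : s ∈ Set.Icc (0:ℝ) 1) (hb : b ∈ Set.Icc (0:ℝ) 1)
    (μU μV : Measure ℝ)
    (hU : μU = if p = 0 then Measure.dirac 0
      else (ENNReal.ofReal p)⁻¹ • volume.restrict (Set.Icc 0 p))
    (hV : μV = if p = 1 then Measure.dirac 1
      else (ENNReal.ofReal (1 - p))⁻¹ • volume.restrict (Set.Icc p 1)) :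
    p * (∫ u, (if s ≤ u ∧ u ≤ p ∧ p ≤ b then (1:ℝ) else 0) ∂μU)
      + (1 - p) * (∫ v, (if s ≤ p ∧ p ≤ v ∧ v ≤ b then (1:ℝ) else 0) ∂μV)
    = (b - s) * (if s ≤ p ∧ p ≤ b then (1:ℝ) else 0) := by
  obtain ⟨hp0, hp1⟩ := hp
  obtain ⟨hs0, hs1⟩ := hs
  obtain ⟨hb0, hb1⟩ := hb
  by_cases hsp : s ≤ p
  · by_cases hpb : p ≤ b
    · -- main case
      have h1 : (∫ u, (if s ≤ u ∧ u ≤ p ∧ p ≤ b then (1:ℝ) else 0) ∂μU)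
          = (μU (Set.Icc s p)).toReal := by
        have : (fun u => if s ≤ u ∧ u ≤ p ∧ p ≤ b then (1:ℝ) else 0)
            = (Set.Icc s p).indicator (fun _ => (1:ℝ)) := by
          funext u
          simp [Set.indicator_apply, Set.mem_Icc, hpb]
        rw [this, integral_indicator_const _ measurableSet_Icc]
        simp
        rfl
      have h2 : (∫ v, (if s ≤ p ∧ p ≤ v ∧ v ≤ b then (1:ℝ) else 0) ∂μV)
          = (μV (Set.Icc p b)).toReal := by
        have : (fun v => if s ≤ p ∧ p ≤ v ∧ v ≤ b then (1:ℝ) else 0)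
            = (Set.Icc p b).indicator (fun _ => (1:ℝ)) := by
          funext v
          simp [Set.indicator_apply, Set.mem_Icc, hsp]
        rw [this, integral_indicator_const _ measurableSet_Icc]
        simp
        rfl
      have hT1 : p * (μU (Set.Icc s p)).toReal = p - s := by
        by_cases hp' : p = 0
        · have hseq : s = 0 := le_antisymm (hp' ▸ hsp) hs0
          subst hp'
          simp [hseq]
        · rw [hU, if_neg hp']
          have hple : (0:ℝ) < p := lt_of_le_of_ne hp0 (Ne.symm hp')
          rw [Measure.smul_apply, Measure.restrict_apply measurableSet_Icc]
          rw [Set.Icc_inter_Icc]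
          have : max s 0 = s := max_eq_left hs0
          rw [this, min_self, Real.volume_Icc, smul_eq_mul, ENNReal.toReal_mul,
            ENNReal.toReal_inv, ENNReal.toReal_ofReal hp0,
            ENNReal.toReal_ofReal (by linarith)]
          field_simp
      have hT2 : (1 - p) * (μV (Set.Icc p b)).toReal = b - p := by
        by_cases hp' : p = 1
        · have hbeq : b = 1 := le_antisymm hb1 (hp' ▸ hpb)
          subst hp'
          simp [hbeq]
        · rw [hV, if_neg hp']
          have hple : (0:ℝ) < 1 - p := by
            rcases lt_or_eq_of_le hp1 with h | h
            · linarith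
            · exact absurd h hp'
          rw [Measure.smul_apply, Measure.restrict_apply measurableSet_Icc]
          rw [Set.Icc_inter_Icc]
          have h1' : min b 1 = b := min_eq_left hb1
          rw [h1', max_self, Real.volume_Icc, smul_eq_mul, ENNReal.toReal_mul,
            ENNReal.toReal_inv, ENNReal.toReal_ofReal hple.le,
            ENNReal.toReal_ofReal (by linarith)]
          field_simp
      rw [h1, h2, hT1, hT2]
      simp [hsp, hpb]
    · have e1 : (fun u => if s ≤ u ∧ u ≤ p ∧ p ≤ b then (1:ℝ) else 0) = fun _ => (0:ℝ) := by
        funext u; simp [hpb]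
      have e2 : (fun v => if s ≤ p ∧ p ≤ v ∧ v ≤ b then (1:ℝ) else 0) = fun _ => (0:ℝ) := by
        funext v
        by_cases h : p ≤ v ∧ v ≤ b
        · exact absurd (le_trans h.1 h.2) hpb
        · simp [h]
      rw [e1, e2]
      simp [hpb]
  · have e1 : (fun u => if s ≤ u ∧ u ≤ p ∧ p ≤ b then (1:ℝ) else 0) = fun _ => (0:ℝ) := by
      funext u
      by_cases h : s ≤ u ∧ u ≤ p
      · exact absurd (le_trans h.1 h.2) hsp
      · rcases not_and_or.mp h with h' | h' <;> simp [h']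
    have e2 : (fun v => if s ≤ p ∧ p ≤ v ∧ v ≤ b then (1:ℝ) else 0) = fun _ => (0:ℝ) := by
      funext v; simp [hsp]
    rw [e1, e2]
    simp [hsp]
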